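/- Let (Ω, 𝓕) be a measurable space, let ℙ be a probability measure on Ω, let λ > 0, let S : Ω → ℝ be a bounded measurable function with η = ∫ exp(−S/λ) dℙ, and let ℚ be any probability measure on Ω absolutely continuous with respect to ℙ with finite KL(ℚ‖ℙ). If ∫ S dℚ + λ · KL(ℚ‖ℙ) = −λ · log η, then ℚ equals the Gibbs measure ℚ* given by weighting ℙ with the density x ↦ exp(−S(x)/λ)/η. -/

import Mathlib

open MeasureTheory

/-- The Kullback–Leibler divergence `KL(Q‖P) = ∫ log (dQ/dP) dQ` for `Q ≪ P`. -/
noncomputable def klDiv {Ω : Type*} [MeasurableSpace Ω] (Q P : Measure Ω) : ℝ :=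
  ∫ x, Real.log (Q.rnDeriv P x).toReal ∂Q

/-- Equality case of the Gibbs inequality: if `Q ≪ R` are probability measures and
`∫ llr Q R dQ = 0`, then `Q = R`. -/
lemma eq_of_integral_llr_eq_zero {Ω : Type*} [MeasurableSpace Ω] (Q R : Measure Ω)
    [IsProbabilityMeasure Q] [IsProbabilityMeasure R] (hQR : Q ≪ R)
    (hint : Integrable (MeasureTheory.llr Q R) Q)
    (hzero : ∫ x, MeasureTheory.llr Q R x ∂Q = 0) : Q = R := by
  set rn : Ω → ENNReal := Q.rnDeriv R with hrn
  have hrn_meas : Measurable rn := Measure.measurable_rnDeriv Q R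
  have h_pos : ∀ᵐ x ∂Q, 0 < rn x := Measure.rnDeriv_pos hQR
  have h_lt_top : ∀ᵐ x ∂Q, rn x < ⊤ := hQR.ae_le (Measure.rnDeriv_lt_top Q R)
  -- the "inverse density" g
  set g : Ω → ℝ := fun x => ((rn x)⁻¹).toReal with hg
  -- lintegral of the ENNReal inverse density
  have hlin : ∫⁻ x, (rn x)⁻¹ ∂Q = R {x | rn x ≠ 0} := by
    rw [← lintegral_rnDeriv_mul hQR (f := fun x => (rn x)⁻¹) hrn_meas.inv.aemeasurable]
    have : ∀ᵐ x ∂ R, rn x * (rn x)⁻¹ = {x | rn x ≠ 0}.indicator (1 : Ω → ENNReal) x := by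
      filter_upwards [Measure.rnDeriv_lt_top Q R] with x hx
      by_cases h0 : rn x = 0
      · simp [h0, Set.indicator_apply]
      · rw [ENNReal.mul_inv_cancel h0 hx.ne]
        simp [Set.indicator_apply, h0]
    have hms : MeasurableSet {x | rn x ≠ 0} := (hrn_meas (measurableSet_singleton 0)).compl
    rw [lintegral_congr_ae this, lintegral_indicator_one hms]
  have hRset_le : R {x | rn x ≠ 0} ≤ 1 := prob_le_one
  -- g is integrable
  have hg_int : Integrable g Q := by
    refine integrable_toReal_of_lintegral_ne_top hrn_meas.inv.aemeasurable ?_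
    rw [hlin]
    exact (hRset_le.trans_lt ENNReal.one_lt_top).ne
  have hg_integral : ∫ x, g x ∂Q = (R {x | rn x ≠ 0}).toReal := by
    rw [hg, integral_toReal (f := fun x => (rn x)⁻¹) hrn_meas.inv.aemeasurable]
    · rw [hlin]
    · filter_upwards [h_pos] with x hx using ENNReal.inv_lt_top.2 hx
  -- the nonnegative function h = g - 1 + llr
  set h : Ω → ℝ := fun x => g x - 1 + MeasureTheory.llr Q R x with hh
  have hlog : ∀ x, Real.log (g x) = - MeasureTheory.llr Q R x := by
    intro x
    simp only [hg, hrn, MeasureTheory.llr, ENNReal.toReal_inv, Real.log_inv]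
  have h_nonneg : 0 ≤ᵐ[Q] h := by
    filter_upwards [h_pos, h_lt_top] with x hx hxt
    have hgx : 0 < g x := by
      rw [hg]
      simp only [ENNReal.toReal_inv]
      exact inv_pos.2 (ENNReal.toReal_pos hx.ne' hxt.ne)
    have := Real.log_le_sub_one_of_pos hgx
    rw [hlog x] at this
    simp only [hh, Pi.zero_apply]
    linarith
  have h_int : Integrable h Q := (hg_int.sub (integrable_const 1)).add hint
  have h_integral : ∫ x, h x ∂Q = (R {x | rn x ≠ 0}).toReal - 1 := by
    have h1 : Integrable (fun x => g x - 1) Q := hg_int.sub (integrable_const 1)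
    have h2 : ∫ x, h x ∂Q = ∫ x, (g x - 1) ∂Q + ∫ x, MeasureTheory.llr Q R x ∂Q :=
      integral_add h1 hint
    rw [h2, hzero, integral_sub hg_int (integrable_const 1), hg_integral]
    simp
  have h_int_nonneg : 0 ≤ ∫ x, h x ∂Q := integral_nonneg_of_ae h_nonneg
  have h_toReal_le : (R {x | rn x ≠ 0}).toReal ≤ 1 := by
    have := ENNReal.toReal_mono ENNReal.one_ne_top hRset_le
    simpa using this
  have h_int_zero : ∫ x, h x ∂Q = 0 := le_antisymm (by rw [h_integral]; linarith) h_int_nonneg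
  -- consequences of equality
  have hR_one : R {x | rn x ≠ 0} = 1 := by
    have h1 : (R {x | rn x ≠ 0}).toReal = 1 := by
      rw [h_integral] at h_int_zero; linarith
    rwa [ENNReal.toReal_eq_one_iff] at h1
  have h_ae_zero : h =ᵐ[Q] 0 := (integral_eq_zero_iff_of_nonneg_ae h_nonneg h_int).mp h_int_zero
  -- rn = 1 a.e. Q
  have h_rn_one_Q : rn =ᵐ[Q] 1 := by
    filter_upwards [h_ae_zero, h_pos, h_lt_top] with x hx0 hxp hxt
    have hgx : 0 < g x := by
      rw [hg]
      simp only [ENNReal.toReal_inv]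
      exact inv_pos.2 (ENNReal.toReal_pos hxp.ne' hxt.ne)
    have hgx1 : g x = 1 := by
      by_contra hne
      have := Real.log_lt_sub_one_of_pos hgx hne
      rw [hlog x] at this
      simp only [hh, Pi.zero_apply] at hx0
      linarith
    have : (rn x).toReal = 1 := by
      simp only [hg, ENNReal.toReal_inv] at hgx1
      exact (inv_eq_one.mp hgx1)
    rw [ENNReal.toReal_eq_one_iff] at this
    simpa using this
  -- rn = 1 a.e. R
  set A : Set Ω := {x | rn x ≠ 1} with hA
  have hA_meas : MeasurableSet A := (hrn_meas (measurableSet_singleton 1)).compl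
  have hQA : Q A = 0 := by
    have := ae_iff.mp h_rn_one_Q
    simpa [hA] using this
  have hRA_lint : ∫⁻ x in A, rn x ∂ R = 0 := by
    rw [Measure.setLIntegral_rnDeriv hQR]; exact hQA
  have h_rn_zero_A : ∀ᵐ x ∂ R, x ∈ A → rn x = 0 := by
    have := (lintegral_eq_zero_iff hrn_meas).mp hRA_lint
    rw [Filter.EventuallyEq, ae_restrict_iff' hA_meas] at this
    exact this
  have h_rn_ne_zero : ∀ᵐ x ∂ R, rn x ≠ 0 := by
    have hmeas0 : MeasurableSet {x | rn x = 0} := hrn_meas (measurableSet_singleton 0)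
    have hsum : R {x | rn x = 0} + R {x | rn x ≠ 0} = 1 := by
      rw [← measure_univ (μ := R)]
      exact measure_add_measure_compl hmeas0
    rw [hR_one] at hsum
    have hc : R {x | rn x = 0} = 0 := by
      have h01 : R {x | rn x = 0} + 1 = 0 + 1 := by rw [hsum, zero_add]
      exact (ENNReal.add_left_inj ENNReal.one_ne_top).mp h01
    rw [ae_iff]
    simpa using hc
  have h_rn_one_R : rn =ᵐ[R] 1 := by
    filter_upwards [h_rn_zero_A, h_rn_ne_zero] with x hxA hx0
    by_contra hne
    exact hx0 (hxA (by simpa [hA] using hne))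
  calc Q = R.withDensity rn := (Measure.withDensity_rnDeriv_eq Q R hQR).symm
    _ = R.withDensity 1 := withDensity_congr_ae h_rn_one_R
    _ = R := withDensity_one

/-- Uniqueness of the minimizer of the free energy: if a probability measure `Q ≪ P` with
finite KL divergence attains the Gibbs variational bound `∫ S dQ + λ·KL(Q‖P) = -λ log η`,
then `Q` is the Gibbs measure with density `exp(-S/λ)/η` with respect to `P`. -/
theorem gibbs_measure_unique_minimizer
    {Ω : Type*} [MeasurableSpace Ω] (P Q : Measure Ω)
    [IsProbabilityMeasure P] [IsProbabilityMeasure Q]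
    (hQP : Q ≪ P)
    (hKL : Integrable (fun x => Real.log (Q.rnDeriv P x).toReal) Q)
    (lam : ℝ) (hlam : 0 < lam)
    (S : Ω → ℝ) (hS : Measurable S) (C : ℝ) (hbdd : ∀ x, |S x| ≤ C)
    (η : ℝ) (hη : η = ∫ x, Real.exp (-S x / lam) ∂P)
    (heq : ∫ x, S x ∂Q + lam * klDiv Q P = -lam * Real.log η) :
    Q = P.withDensity (fun x => ENNReal.ofReal (Real.exp (-S x / lam) / η)) := by
  set f : Ω → ℝ := fun x => -S x / lam with hf
  -- S is integrable w.r.t. Q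
  have hS_int : Integrable S Q :=
    Integrable.mono' (integrable_const C) hS.aestronglyMeasurable
      (Filter.Eventually.of_forall fun x => by simpa using hbdd x)
  have hf_int : Integrable f Q := (hS_int.neg).div_const lam
  -- exp ∘ f is integrable w.r.t. P
  have hexp : Integrable (fun x => Real.exp (f x)) P := by
    refine Integrable.mono' (integrable_const (Real.exp (C / lam)))
      (Real.measurable_exp.comp ((hS.neg).div_const lam)).aestronglyMeasurable
      (Filter.Eventually.of_forall fun x => ?_)
    rw [Real.norm_eq_abs, abs_of_pos (Real.exp_pos _)]
    apply Real.exp_le_exp.mpr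
    have h1 : -S x ≤ C := by have := hbdd x; rw [abs_le] at this; linarith [this.1]
    exact (div_le_div_iff_of_pos_right hlam).mpr h1
  -- the tilted (Gibbs) measure
  have hη_eq : ∫ x, Real.exp (f x) ∂P = η := hη.symm
  have hR_prob : IsProbabilityMeasure (P.tilted f) := isProbabilityMeasure_tilted hexp
  have hQR : Q ≪ P.tilted f := hQP.trans (absolutelyContinuous_tilted hexp)
  have hKL' : Integrable (MeasureTheory.llr Q P) Q := hKL
  have hint : Integrable (MeasureTheory.llr Q (P.tilted f)) Q :=
    integrable_llr_tilted_right hQP hf_int hKL' hexp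
  -- the integral of llr against the tilted measure vanishes
  have hzero : ∫ x, MeasureTheory.llr Q (P.tilted f) x ∂Q = 0 := by
    rw [integral_llr_tilted_right hQP hf_int hexp hKL', hη_eq]
    have hfQ : ∫ x, f x ∂Q = -(∫ x, S x ∂Q) / lam := by
      rw [hf]
      simp_rw [neg_div]
      rw [integral_neg, integral_div]
    have hllrQ : ∫ x, MeasureTheory.llr Q P x ∂Q = klDiv Q P := rfl
    rw [hfQ, hllrQ]
    have hlam' : lam ≠ 0 := hlam.ne'
    have hklDiv : klDiv Q P = -Real.log η - (∫ x, S x ∂Q) / lam := by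
      field_simp
      linarith [heq]
    rw [hklDiv]
    ring
  have hQeq : Q = P.tilted f := eq_of_integral_llr_eq_zero Q (P.tilted f) hQR hint hzero
  rw [hQeq, Measure.tilted, hη_eq]
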